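/- Rectangle search terminates on finite state spaces: if the set of states V is finite and all edge costs are strictly positive, then for any heuristic h ≥ 0 the main loop of rectangle search executes only finitely many iterations (every state is inserted into the open lists only finitely many times). -/

import Mathlib

/-!
Formalization of rectangle search (Lemons, Ruml et al., "Rectangle Search:
An Anytime Beam Search").

A search problem consists of states `V`, a start state, a Boolean goal
predicate, a successor function `succ : V → Finset V` and rational edge
costs.  Rectangle search is modeled operationally: its state `RS` records
the list of per-depth open lists (priority queues ordered by the
distance-to-go estimate `d`), the closed set (a map from states to recorded
g-values), the incumbent (`none` = cost ∞), the `depth` counter, and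
instrumentation fields: `offset` (number of depth levels trimmed from the
front), `expCount` (number of main-loop expansions per absolute depth
level), `totalExp` (total main-loop expansions), `prunedCount` (number of
nodes discarded because f(n) ≥ g(incumbent)) and `emptySel` (set when a
selection is attempted on an exhausted open list).  `run P h d a k` is the
state after `k` iterations of the main loop with aspect `a`.
-/

namespace RectangleSearchFormal

structure SearchProblem (V : Type) where
  start : V
  isGoal : V → Bool
  succ : V → Finset V
  cost : V → V → ℚ

variable {V : Type}

/-- `p` is a path: a nonempty list of states, each a successor of the previous. -/
def IsPath (P : SearchProblem V) : List V → Prop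
  | [] => False
  | [_] => True
  | u :: v :: rest => v ∈ P.succ u ∧ IsPath P (v :: rest)

/-- The cost of a path: the sum of its edge costs. -/
def pathCost (P : SearchProblem V) : List V → ℚ
  | [] => 0
  | [_] => 0
  | u :: v :: rest => P.cost u v + pathCost P (v :: rest)

/-- `p` is a path starting at `u` and ending at `w`. -/
def IsPathFromTo (P : SearchProblem V) (p : List V) (u w : V) : Prop :=
  IsPath P p ∧ p.head? = some u ∧ p.getLast? = some w

/-- `p` is a path from the start state to a goal state. -/
def IsSolutionPath (P : SearchProblem V) (p : List V) : Prop :=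
  ∃ w, IsPathFromTo P p P.start w ∧ P.isGoal w = true

/-- All edge costs are strictly positive. -/
def EdgeCostsPos (P : SearchProblem V) : Prop :=
  ∀ u v, v ∈ P.succ u → 0 < P.cost u v

/-- `h` is admissible: for every state `n` and every path from `n` to a goal
state, `h n` is at most the cost of that path. -/
def Admissible (P : SearchProblem V) (h : V → ℚ) : Prop :=
  ∀ n w p, IsPathFromTo P p n w → P.isGoal w = true → h n ≤ pathCost P p

/-- A search node: a state together with the g-value and the path by which
it was reached from the start state. -/
structure Node (V : Type) where
  state : V
  g : ℚ
  path : List V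

/-- The state of rectangle search. -/
structure RS (V : Type) where
  openlists : List (List (Node V))
  closed : V → Option ℚ
  incumbent : Option (Node V)
  depth : ℕ
  offset : ℕ
  expCount : ℕ → ℕ
  totalExp : ℕ
  prunedCount : ℕ
  emptySel : Bool

variable [DecidableEq V]

/-- The cost of the incumbent (∞ when none has been found yet). -/
def incCost (σ : RS V) : WithTop ℚ :=
  match σ.incumbent with
  | none => ⊤
  | some n => (n.g : WithTop ℚ)

/-- Repeatedly remove the front node of an open list, discarding (pruning)
it while `f(n) ≥ g(incumbent)`; returns the selected node (if any), the
rest of the list, and the number of pruned nodes. -/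
def popGood (h : V → ℚ) (bound : WithTop ℚ) :
    List (Node V) → Option (Node V) × List (Node V) × ℕ
  | [] => (none, [], 0)
  | n :: rest =>
    if ((n.g + h n.state : ℚ) : WithTop ℚ) < bound then (some n, rest, 0)
    else
      let r := popGood h bound rest
      (r.1, r.2.1, r.2.2 + 1)

/-- Insertion into a priority queue ordered by the distance-to-go estimate `d`. -/
def insertByD (d : V → ℚ) (n : Node V) : List (Node V) → List (Node V)
  | [] => [n]
  | m :: rest =>
    if d n.state ≤ d m.state then n :: m :: rest else m :: insertByD d n rest

def padTo (ls : List (List (Node V))) (k : ℕ) : List (List (Node V)) :=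
  ls ++ List.replicate (k - ls.length) ([] : List (Node V))

def insertOpen (d : V → ℚ) (σ : RS V) (i : ℕ) (n : Node V) : RS V :=
  let ls := padTo σ.openlists (i + 1)
  { σ with openlists := ls.set i (insertByD d n (ls.getD i [])) }

/-- Process one generated child `c` of `parent`: a child with
`f(child) < g(incumbent)` that is a goal becomes the new incumbent; a
non-goal child with `f(child) < g(incumbent)` is inserted into
`openlists[tgt]` unless it appears in closed with a g-value that is not
larger. -/
def processChild (P : SearchProblem V) (h d : V → ℚ) (parent : Node V) (tgt : ℕ)
    (σ : RS V) (c : V) : RS V :=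
  let gc := parent.g + P.cost parent.state c
  if ((gc + h c : ℚ) : WithTop ℚ) < incCost σ then
    if P.isGoal c then
      { σ with incumbent := some ⟨c, gc, parent.path ++ [c]⟩ }
    else
      match σ.closed c with
      | some gdup =>
          if gc < gdup then insertOpen d σ tgt ⟨c, gc, parent.path ++ [c]⟩ else σ
      | none => insertOpen d σ tgt ⟨c, gc, parent.path ++ [c]⟩
  else σ

/-- Generate all successors of `parent`, placing surviving children into
`openlists[tgt]`. -/
noncomputable def expandNode (P : SearchProblem V) (h d : V → ℚ)
    (parent : Node V) (tgt : ℕ) (σ : RS V) : RS V :=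
  (P.succ parent.state).toList.foldl (processChild P h d parent tgt) σ

/-- Select & expand one node from `openlists[i]` (Algorithm 2): prune front
nodes with `f ≥ g(incumbent)`; if a node survives, add it to closed, count
the expansion at absolute depth level `offset + i + 1`, and expand it into
`openlists[i+1]`. -/
noncomputable def selectExpand (P : SearchProblem V) (h d : V → ℚ)
    (σ : RS V) (i : ℕ) : RS V :=
  let r := popGood h (incCost σ) (σ.openlists.getD i [])
  let σ1 := { σ with openlists := σ.openlists.set i r.2.1,
                     prunedCount := σ.prunedCount + r.2.2 }
  match r.1 with
  | none => { σ1 with emptySel := true }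
  | some n =>
    let lvl := σ.offset + i + 1
    let σ2 := { σ1 with
        closed := fun v => if v = n.state then some n.g else σ1.closed v,
        expCount := fun j => if j = lvl then σ1.expCount j + 1 else σ1.expCount j,
        totalExp := σ1.totalExp + 1 }
    expandNode P h d n (i + 1) σ2

def trimFront : List (List (Node V)) → ℕ × List (List (Node V))
  | [] => (0, [])
  | [] :: rest => let r := trimFront rest; (r.1 + 1, r.2)
  | l :: rest => (0, l :: rest)

/-- Trim empty lists from the start and end of `openlists`, recording the
number trimmed from the front in `offset`. -/
def trim (σ : RS V) : RS V :=
  let f := trimFront σ.openlists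
  { σ with offset := σ.offset + f.1,
           openlists := (f.2.reverse.dropWhile List.isEmpty).reverse }

/-- One iteration of the main loop of rectangle search with aspect `a`
(Algorithm 1).  If every open list is empty the loop has terminated and the
state is unchanged. -/
noncomputable def mainIter (P : SearchProblem V) (h d : V → ℚ) (a : ℕ) (σ : RS V) : RS V :=
  if σ.openlists.all List.isEmpty then σ
  else
    let L := σ.openlists.length
    let D := σ.depth
    -- (i) one select & expand at every existing depth level except the deepest
    let σ1 := (List.range (L - 1)).foldl (selectExpand P h d) σ
    -- (ii) append `a` new empty open lists
    let σ2 := { σ1 with openlists := σ1.openlists ++ List.replicate a [] }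
    -- (iii) `depth`-many select & expands at each newly reachable level except the last
    let σ3 := (List.range a).foldl
        (fun σ' k => (List.range D).foldl
          (fun σ'' _ => selectExpand P h d σ'' (L - 1 + k)) σ') σ2
    -- (iv) increase depth by `a` and trim empty lists from both ends
    trim { σ3 with depth := σ3.depth + a }

/-- The initial state: the start state is expanded, with its children
inserted into `openlists[0]`, the incumbent cost is ∞ and `depth = 1`. -/
noncomputable def initRS (P : SearchProblem V) (h d : V → ℚ) : RS V :=
  expandNode P h d ⟨P.start, 0, [P.start]⟩ 0
    { openlists := [[]],
      closed := fun v => if v = P.start then some 0 else none,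
      incumbent := none, depth := 1, offset := 0,
      expCount := fun _ => 0, totalExp := 0, prunedCount := 0, emptySel := false }

/-- The state of rectangle search after `k` iterations of the main loop. -/
noncomputable def run (P : SearchProblem V) (h d : V → ℚ) (a : ℕ) (k : ℕ) : RS V :=
  (mainIter P h d a)^[k] (initRS P h d)

/-- The main loop has terminated: no open nodes remain at any depth level. -/
def Done (σ : RS V) : Prop := ∀ l ∈ σ.openlists, l = []


set_option linter.unusedSectionVars false
section TerminationProof

variable {V : Type} [DecidableEq V]
variable (P : SearchProblem V) (h d : V → ℚ)

/-! ### generic list lemmas -/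

lemma getD_eq_nil_of_le {l : List (List (Node V))} {i : ℕ} (hi : l.length ≤ i) :
    l.getD i [] = [] := by
  rw [List.getD_eq_getElem?_getD, List.getElem?_eq_none hi]; rfl

lemma getD_append_replicate (l : List (List (Node V))) (k i : ℕ) :
    (l ++ List.replicate k ([] : List (Node V))).getD i [] = l.getD i [] := by
  rcases lt_or_ge i l.length with hi | hi
  · rw [List.getD_eq_getElem?_getD, List.getD_eq_getElem?_getD, List.getElem?_append_left hi]
  · rw [List.getD_eq_getElem?_getD, List.getD_eq_getElem?_getD,
      List.getElem?_append_right hi, List.getElem?_replicate, List.getElem?_eq_none hi]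
    split <;> rfl

lemma mem_set_getD {x : Node V} {l : List (List (Node V))} {i j : ℕ} {y : List (Node V)}
    (hx : x ∈ (l.set i y).getD j []) : (j = i ∧ x ∈ y) ∨ x ∈ l.getD j [] := by
  rcases eq_or_ne j i with rfl | hne
  · rcases lt_or_ge j l.length with hj | hj
    · rw [List.getD_eq_getElem?_getD, List.getElem?_set_self hj] at hx
      exact Or.inl ⟨rfl, by simpa using hx⟩
    · rw [List.set_eq_of_length_le hj] at hx; exact Or.inr hx
  · rw [List.getD_eq_getElem?_getD, List.getElem?_set_ne (Ne.symm hne)] at hx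
    rw [List.getD_eq_getElem?_getD]; exact Or.inr hx

lemma getD_set_ne {l : List (List (Node V))} {i j : ℕ} {y : List (Node V)} (hne : i ≠ j) :
    (l.set i y).getD j [] = l.getD j [] := by
  rw [List.getD_eq_getElem?_getD, List.getElem?_set_ne hne, List.getD_eq_getElem?_getD]

lemma le_foldr_max {x : ℚ} {l : List ℚ} (hx : x ∈ l) : x ≤ l.foldr max 0 := by
  induction l with
  | nil => simp at hx
  | cons y t ih =>
    rcases List.mem_cons.1 hx with rfl | hx
    · exact le_max_left _ _
    · exact le_trans (ih hx) (le_max_right _ _)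

/-! ### popGood lemmas -/

lemma popGood_sel_mem {b : WithTop ℚ} {l : List (Node V)} {n : Node V}
    (hn : (popGood h b l).1 = some n) : n ∈ l := by
  induction l with
  | nil => simp [popGood] at hn
  | cons x xs ih =>
    simp only [popGood] at hn
    split at hn
    · simp only [Option.some.injEq] at hn; subst hn; exact List.mem_cons_self
    · exact List.mem_cons_of_mem _ (ih hn)

lemma popGood_rest_mem {b : WithTop ℚ} {l : List (Node V)} {x : Node V}
    (hx : x ∈ (popGood h b l).2.1) : x ∈ l := by
  induction l with
  | nil => simp [popGood] at hx
  | cons y xs ih =>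
    simp only [popGood] at hx
    split at hx
    · exact List.mem_cons_of_mem _ hx
    · exact List.mem_cons_of_mem _ (ih hx)

lemma popGood_rest_length {b : WithTop ℚ} {l : List (Node V)} (hl : l ≠ []) :
    (popGood h b l).2.1.length < l.length := by
  induction l with
  | nil => exact absurd rfl hl
  | cons y xs ih =>
    simp only [popGood]
    split
    · simp
    · rcases eq_or_ne xs [] with rfl | hxs
      · simp [popGood]
      · exact Nat.lt_succ_of_lt (ih hxs)

lemma popGood_top (n : Node V) (l : List (Node V)) :
    popGood h ⊤ (n :: l) = (some n, l, 0) := by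
  simp [popGood]

/-! ### insertByD / insertOpen -/

lemma mem_insertByD {x n : Node V} {l : List (Node V)} (hx : x ∈ insertByD d n l) :
    x = n ∨ x ∈ l := by
  induction l with
  | nil => simpa [insertByD] using hx
  | cons m rest ih =>
    simp only [insertByD] at hx
    split at hx
    · rcases List.mem_cons.1 hx with rfl | hx
      · exact Or.inl rfl
      · exact Or.inr hx
    · rcases List.mem_cons.1 hx with rfl | hx
      · exact Or.inr (List.mem_cons_self)
      · rcases ih hx with rfl | hx
        · exact Or.inl rfl
        · exact Or.inr (List.mem_cons_of_mem _ hx)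

lemma padTo_getD (l : List (List (Node V))) (k i : ℕ) :
    (padTo l k).getD i [] = l.getD i [] := getD_append_replicate l _ i

@[simp] lemma insertOpen_closed (σ : RS V) (t : ℕ) (n : Node V) :
    (insertOpen d σ t n).closed = σ.closed := rfl
@[simp] lemma insertOpen_incumbent (σ : RS V) (t : ℕ) (n : Node V) :
    (insertOpen d σ t n).incumbent = σ.incumbent := rfl
@[simp] lemma insertOpen_offset (σ : RS V) (t : ℕ) (n : Node V) :
    (insertOpen d σ t n).offset = σ.offset := rfl
@[simp] lemma insertOpen_depth (σ : RS V) (t : ℕ) (n : Node V) :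
    (insertOpen d σ t n).depth = σ.depth := rfl
@[simp] lemma insertOpen_totalExp (σ : RS V) (t : ℕ) (n : Node V) :
    (insertOpen d σ t n).totalExp = σ.totalExp := rfl

lemma mem_insertOpen_getD {σ : RS V} {t : ℕ} {n : Node V} {i : ℕ} {x : Node V}
    (hx : x ∈ (insertOpen d σ t n).openlists.getD i []) :
    (i = t ∧ (x = n ∨ x ∈ σ.openlists.getD t [])) ∨ x ∈ σ.openlists.getD i [] := by
  have hx' : x ∈ ((padTo σ.openlists (t+1)).set t
      (insertByD d n ((padTo σ.openlists (t+1)).getD t []))).getD i [] := hx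
  rcases mem_set_getD hx' with ⟨rfl, hmem⟩ | hold
  · rcases mem_insertByD d hmem with rfl | hmem'
    · exact Or.inl ⟨rfl, Or.inl rfl⟩
    · rw [padTo_getD] at hmem'; exact Or.inl ⟨rfl, Or.inr hmem'⟩
  · rw [padTo_getD] at hold; exact Or.inr hold

lemma insertOpen_getD_ne {σ : RS V} {t : ℕ} {n : Node V} {i : ℕ} (hne : i ≠ t) :
    (insertOpen d σ t n).openlists.getD i [] = σ.openlists.getD i [] := by
  have : (insertOpen d σ t n).openlists.getD i []
      = ((padTo σ.openlists (t+1)).set t _).getD i [] := rfl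
  rw [this, getD_set_ne (Ne.symm hne), padTo_getD]

lemma insertOpen_len_ge (σ : RS V) (t : ℕ) (n : Node V) :
    σ.openlists.length ≤ (insertOpen d σ t n).openlists.length := by
  have : (insertOpen d σ t n).openlists.length
      = ((padTo σ.openlists (t+1)).set t _).length := rfl
  rw [this, List.length_set]
  simp [padTo]


/-! ### predicates -/

def LG (c0 : ℚ) (σ : RS V) : Prop :=
  ∀ i x, x ∈ σ.openlists.getD i [] → ((σ.offset + i + 1 : ℕ) : ℚ) * c0 ≤ x.g

def KP (B0 : ℚ) (Λ0 : ℕ) (σ : RS V) : Prop :=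
  incCost σ ≤ (B0 : WithTop ℚ) ∧
  ∀ i x, x ∈ σ.openlists.getD i [] → (σ.offset + i ≤ Λ0 ∨ x.g + h x.state < B0)

def BI (m : ℚ) (S : V → Prop) (σ : RS V) : Prop :=
  (∀ v g, σ.closed v = some g → g ≤ m) ∧
  (∀ i x, x ∈ σ.openlists.getD i [] → (σ.closed x.state).isSome = true → x.g ≤ m) ∧
  (∀ v, (σ.closed v).isSome = true ↔ S v)

lemma incCost_congr {σ σ' : RS V} (he : σ'.incumbent = σ.incumbent) :
    incCost σ' = incCost σ := by unfold incCost; rw [he]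

lemma incCost_none {σ : RS V} (he : σ.incumbent = none) : incCost σ = ⊤ := by
  unfold incCost; rw [he]

/-! ### processChild lemmas -/

lemma pc_cases (parent : Node V) (tgt : ℕ) (σ : RS V) (c : V) :
    processChild P h d parent tgt σ c = σ ∨
    (((parent.g + P.cost parent.state c + h c : ℚ) : WithTop ℚ) < incCost σ ∧
      (processChild P h d parent tgt σ c
          = { σ with incumbent := some ⟨c, parent.g + P.cost parent.state c, parent.path ++ [c]⟩ } ∨
        (processChild P h d parent tgt σ c
            = insertOpen d σ tgt ⟨c, parent.g + P.cost parent.state c, parent.path ++ [c]⟩ ∧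
          (σ.closed c = none ∨ ∃ gdup, σ.closed c = some gdup ∧ parent.g + P.cost parent.state c < gdup)))) := by
  unfold processChild
  by_cases hf : ((parent.g + P.cost parent.state c + h c : ℚ) : WithTop ℚ) < incCost σ
  · rw [if_pos hf]
    by_cases hg : P.isGoal c = true
    · rw [if_pos hg]; exact Or.inr ⟨hf, Or.inl rfl⟩
    · rw [if_neg hg]
      cases hcl : σ.closed c with
      | none => exact Or.inr ⟨hf, Or.inr ⟨rfl, Or.inl rfl⟩⟩
      | some gdup =>
        by_cases hlt : parent.g + P.cost parent.state c < gdup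
        · refine Or.inr ⟨hf, Or.inr ⟨?_, Or.inr ⟨gdup, rfl, hlt⟩⟩⟩
          show (if parent.g + P.cost parent.state c < gdup
              then insertOpen d σ tgt ⟨c, parent.g + P.cost parent.state c, parent.path ++ [c]⟩
              else σ)
            = insertOpen d σ tgt ⟨c, parent.g + P.cost parent.state c, parent.path ++ [c]⟩
          rw [if_pos hlt]
        · refine Or.inl ?_
          show (if parent.g + P.cost parent.state c < gdup
              then insertOpen d σ tgt ⟨c, parent.g + P.cost parent.state c, parent.path ++ [c]⟩
              else σ) = σ
          rw [if_neg hlt]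
  · rw [if_neg hf]; exact Or.inl rfl

lemma pc_closed (parent : Node V) (tgt : ℕ) (σ : RS V) (c : V) :
    (processChild P h d parent tgt σ c).closed = σ.closed := by
  rcases pc_cases P h d parent tgt σ c with he | ⟨_, he | ⟨he, _⟩⟩
  · rw [he]
  · rw [he]
  · rw [he]; rfl

lemma pc_offset (parent : Node V) (tgt : ℕ) (σ : RS V) (c : V) :
    (processChild P h d parent tgt σ c).offset = σ.offset := by
  rcases pc_cases P h d parent tgt σ c with he | ⟨_, he | ⟨he, _⟩⟩
  · rw [he]
  · rw [he]
  · rw [he]; rfl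

lemma pc_depth (parent : Node V) (tgt : ℕ) (σ : RS V) (c : V) :
    (processChild P h d parent tgt σ c).depth = σ.depth := by
  rcases pc_cases P h d parent tgt σ c with he | ⟨_, he | ⟨he, _⟩⟩
  · rw [he]
  · rw [he]
  · rw [he]; rfl

lemma pc_isSome (parent : Node V) (tgt : ℕ) (σ : RS V) (c : V)
    (hs : σ.incumbent.isSome = true) :
    (processChild P h d parent tgt σ c).incumbent.isSome = true := by
  rcases pc_cases P h d parent tgt σ c with he | ⟨_, he | ⟨he, _⟩⟩
  · rw [he]; exact hs
  · rw [he]; rfl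
  · rw [he]; rw [insertOpen_incumbent]; exact hs

lemma pc_incCost_le (hnonneg : ∀ v, 0 ≤ h v) (parent : Node V) (tgt : ℕ) (σ : RS V) (c : V)
    {b : WithTop ℚ} (hb : incCost σ ≤ b) :
    incCost (processChild P h d parent tgt σ c) ≤ b := by
  rcases pc_cases P h d parent tgt σ c with he | ⟨hf, he | ⟨he, _⟩⟩
  · rw [he]; exact hb
  · rw [he]
    have h1 : incCost { σ with incumbent := some (⟨c, parent.g + P.cost parent.state c, parent.path ++ [c]⟩ : Node V) }
        = ((parent.g + P.cost parent.state c : ℚ) : WithTop ℚ) := rfl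
    rw [h1]
    have h2 : ((parent.g + P.cost parent.state c : ℚ) : WithTop ℚ)
        ≤ ((parent.g + P.cost parent.state c + h c : ℚ) : WithTop ℚ) := by
      rw [WithTop.coe_le_coe]; linarith [hnonneg c]
    exact le_trans (le_trans h2 hf.le) hb
  · rw [he, incCost_congr (insertOpen_incumbent d _ _ _)]; exact hb

lemma pc_getD_ne {parent : Node V} {tgt : ℕ} {σ : RS V} {c : V} {i : ℕ} (hne : i ≠ tgt) :
    (processChild P h d parent tgt σ c).openlists.getD i [] = σ.openlists.getD i [] := by
  rcases pc_cases P h d parent tgt σ c with he | ⟨_, he | ⟨he, _⟩⟩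
  · rw [he]
  · rw [he]
  · rw [he]; exact insertOpen_getD_ne d hne

lemma pc_len_ge (parent : Node V) (tgt : ℕ) (σ : RS V) (c : V) :
    σ.openlists.length ≤ (processChild P h d parent tgt σ c).openlists.length := by
  rcases pc_cases P h d parent tgt σ c with he | ⟨_, he | ⟨he, _⟩⟩
  · rw [he]
  · rw [he]
  · rw [he]; exact insertOpen_len_ge d σ tgt _

lemma pc_LG {c0 : ℚ} (hcost : ∀ u v, v ∈ P.succ u → c0 ≤ P.cost u v)
    {parent : Node V} {tgt : ℕ} {σ : RS V} {c : V} (hc : c ∈ P.succ parent.state)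
    (hp : ((σ.offset + tgt : ℕ) : ℚ) * c0 ≤ parent.g)
    (hLG : LG c0 σ) : LG c0 (processChild P h d parent tgt σ c) := by
  rcases pc_cases P h d parent tgt σ c with he | ⟨hf, he | ⟨he, hcl⟩⟩
  · rw [he]; exact hLG
  · rw [he]; exact hLG
  · rw [he]
    intro i x hx
    have hox : (insertOpen d σ tgt ⟨c, parent.g + P.cost parent.state c, parent.path ++ [c]⟩).offset
        = σ.offset := rfl
    rw [hox]
    rcases mem_insertOpen_getD d hx with ⟨heq, hin⟩ | hold
    · rw [heq]
      rcases hin with rfl | hold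
      · have h1 : ((σ.offset + tgt + 1 : ℕ) : ℚ) * c0 = ((σ.offset + tgt : ℕ) : ℚ) * c0 + c0 := by
          push_cast; ring
        rw [h1]
        exact add_le_add hp (hcost _ _ hc)
      · exact hLG tgt x hold
    · exact hLG i x hold

lemma pc_KP {B0 : ℚ} {Λ0 : ℕ} (hnonneg : ∀ v, 0 ≤ h v)
    {parent : Node V} {tgt : ℕ} {σ : RS V} {c : V}
    (hK : KP h B0 Λ0 σ) : KP h B0 Λ0 (processChild P h d parent tgt σ c) := by
  obtain ⟨hb, hmem⟩ := hK
  rcases pc_cases P h d parent tgt σ c with he | ⟨hf, he | ⟨he, _⟩⟩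
  · rw [he]; exact ⟨hb, hmem⟩
  · rw [he]
    refine ⟨?_, hmem⟩
    have h1 : incCost { σ with incumbent := some (⟨c, parent.g + P.cost parent.state c, parent.path ++ [c]⟩ : Node V) }
        = ((parent.g + P.cost parent.state c : ℚ) : WithTop ℚ) := rfl
    rw [h1]
    have h2 : ((parent.g + P.cost parent.state c : ℚ) : WithTop ℚ)
        ≤ ((parent.g + P.cost parent.state c + h c : ℚ) : WithTop ℚ) := by
      rw [WithTop.coe_le_coe]; linarith [hnonneg c]
    exact le_trans (le_trans h2 hf.le) hb
  · rw [he]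
    refine ⟨by rw [incCost_congr (insertOpen_incumbent d _ _ _)]; exact hb, ?_⟩
    intro i x hx
    have hox : (insertOpen d σ tgt ⟨c, parent.g + P.cost parent.state c, parent.path ++ [c]⟩).offset
        = σ.offset := rfl
    rw [hox]
    rcases mem_insertOpen_getD d hx with ⟨heq, hin⟩ | hold
    · rcases hin with rfl | hold
      · right
        have hlt : ((parent.g + P.cost parent.state c + h c : ℚ) : WithTop ℚ) < (B0 : WithTop ℚ) :=
          lt_of_lt_of_le hf hb
        exact_mod_cast hlt
      · rw [heq]; exact hmem _ x hold
    · exact hmem i x hold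

lemma pc_BI {m : ℚ} {S : V → Prop}
    {parent : Node V} {tgt : ℕ} {σ : RS V} {c : V}
    (hB : BI m S σ) : BI m S (processChild P h d parent tgt σ c) := by
  obtain ⟨h1, h2, h3⟩ := hB
  rcases pc_cases P h d parent tgt σ c with he | ⟨hf, he | ⟨he, hcl⟩⟩
  · rw [he]; exact ⟨h1, h2, h3⟩
  · rw [he]; exact ⟨h1, h2, h3⟩
  · rw [he]
    refine ⟨h1, ?_, h3⟩
    intro i x hx hsome
    rw [insertOpen_closed] at hsome
    rcases mem_insertOpen_getD d hx with ⟨heq, hin⟩ | hold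
    · rcases hin with rfl | hold
      · rcases hcl with hnone | ⟨gdup, hg, hlt⟩
        · rw [hnone] at hsome; simp at hsome
        · exact le_of_lt (lt_of_lt_of_le hlt (h1 _ _ hg))
      · exact h2 _ x hold hsome
    · exact h2 i x hold hsome

/-! ### foldl helpers -/

lemma foldl_pres {α : Type*} {f : RS V → α → RS V} {Q : RS V → Prop} :
    ∀ (l : List α), (∀ σ x, x ∈ l → Q σ → Q (f σ x)) → ∀ σ, Q σ → Q (l.foldl f σ)
  | [], _, σ, hQ => hQ
  | x :: t, hf, σ, hQ => by
    rw [List.foldl_cons]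
    exact foldl_pres t (fun σ' y hy => hf σ' y (List.mem_cons_of_mem _ hy))
      _ (hf σ x (List.mem_cons_self) hQ)

lemma foldl_anchored {α : Type*} {f : RS V → α → RS V} {Q A : RS V → Prop}
    (habs : ∀ σ x, A σ → A (f σ x)) :
    ∀ (l : List α), (∀ σ x, x ∈ l → Q σ → ¬ A (f σ x) → Q (f σ x)) →
      ∀ σ, Q σ → ¬ A (l.foldl f σ) → Q (l.foldl f σ)
  | [], _, σ, hQ, _ => hQ
  | x :: t, hstep, σ, hQ, hA => by
    rw [List.foldl_cons] at hA ⊢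
    have hnA : ¬ A (f σ x) := fun hAx =>
      hA (foldl_pres t (fun σ' y _ => habs σ' y) _ hAx)
    exact foldl_anchored habs t (fun σ' y hy => hstep σ' y (List.mem_cons_of_mem _ hy))
      _ (hstep σ x (List.mem_cons_self) hQ hnA) hA

/-! ### expandNode lemmas -/

lemma en_closed (parent : Node V) (tgt : ℕ) (σ : RS V) :
    (expandNode P h d parent tgt σ).closed = σ.closed := by
  unfold expandNode
  exact foldl_pres (Q := fun σ' => σ'.closed = σ.closed) _
    (fun σ' c _ hq => by rw [pc_closed P h d]; exact hq) σ rfl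

lemma en_offset (parent : Node V) (tgt : ℕ) (σ : RS V) :
    (expandNode P h d parent tgt σ).offset = σ.offset := by
  unfold expandNode
  exact foldl_pres (Q := fun σ' => σ'.offset = σ.offset) _
    (fun σ' c _ hq => by rw [pc_offset P h d]; exact hq) σ rfl

lemma en_depth (parent : Node V) (tgt : ℕ) (σ : RS V) :
    (expandNode P h d parent tgt σ).depth = σ.depth := by
  unfold expandNode
  exact foldl_pres (Q := fun σ' => σ'.depth = σ.depth) _
    (fun σ' c _ hq => by rw [pc_depth P h d]; exact hq) σ rfl

lemma en_isSome (parent : Node V) (tgt : ℕ) (σ : RS V)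
    (hs : σ.incumbent.isSome = true) :
    (expandNode P h d parent tgt σ).incumbent.isSome = true := by
  unfold expandNode
  exact foldl_pres (Q := fun σ' => σ'.incumbent.isSome = true) _
    (fun σ' c _ hq => pc_isSome P h d _ _ _ _ hq) σ hs

lemma en_incCost_le (hnonneg : ∀ v, 0 ≤ h v) (parent : Node V) (tgt : ℕ) (σ : RS V)
    {b : WithTop ℚ} (hb : incCost σ ≤ b) :
    incCost (expandNode P h d parent tgt σ) ≤ b := by
  unfold expandNode
  exact foldl_pres (Q := fun σ' => incCost σ' ≤ b) _
    (fun σ' c _ hq => pc_incCost_le P h d hnonneg _ _ _ _ hq) σ hb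

lemma en_getD_ne (parent : Node V) {tgt : ℕ} (σ : RS V) {i : ℕ} (hne : i ≠ tgt) :
    (expandNode P h d parent tgt σ).openlists.getD i [] = σ.openlists.getD i [] := by
  unfold expandNode
  exact foldl_pres (Q := fun σ' => σ'.openlists.getD i [] = σ.openlists.getD i []) _
    (fun σ' c _ hq => by rw [pc_getD_ne P h d hne]; exact hq) σ rfl

lemma en_len_ge (parent : Node V) (tgt : ℕ) (σ : RS V) :
    σ.openlists.length ≤ (expandNode P h d parent tgt σ).openlists.length := by
  unfold expandNode
  exact foldl_pres (Q := fun σ' => σ.openlists.length ≤ σ'.openlists.length) _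
    (fun σ' c _ hq => le_trans hq (pc_len_ge P h d _ _ _ _)) σ le_rfl

lemma en_LG {c0 : ℚ} (hcost : ∀ u v, v ∈ P.succ u → c0 ≤ P.cost u v)
    {parent : Node V} {tgt : ℕ} {σ : RS V}
    (hp : ((σ.offset + tgt : ℕ) : ℚ) * c0 ≤ parent.g)
    (hLG : LG c0 σ) : LG c0 (expandNode P h d parent tgt σ) := by
  unfold expandNode
  have := foldl_pres (Q := fun σ' => LG c0 σ' ∧ σ'.offset = σ.offset)
    (f := processChild P h d parent tgt) (P.succ parent.state).toList
    (fun σ' c hc hq => by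
      refine ⟨pc_LG P h d hcost (by simpa using hc) (by rw [hq.2]; exact hp) hq.1, ?_⟩
      rw [pc_offset P h d]; exact hq.2) σ ⟨hLG, rfl⟩
  exact this.1

lemma en_KP {B0 : ℚ} {Λ0 : ℕ} (hnonneg : ∀ v, 0 ≤ h v)
    {parent : Node V} {tgt : ℕ} {σ : RS V}
    (hK : KP h B0 Λ0 σ) : KP h B0 Λ0 (expandNode P h d parent tgt σ) := by
  unfold expandNode
  exact foldl_pres (Q := KP h B0 Λ0) _
    (fun σ' c _ hq => pc_KP P h d hnonneg hq) σ hK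

lemma en_BI {m : ℚ} {S : V → Prop} {parent : Node V} {tgt : ℕ} {σ : RS V}
    (hB : BI m S σ) : BI m S (expandNode P h d parent tgt σ) := by
  unfold expandNode
  exact foldl_pres (Q := BI m S) _ (fun σ' c _ hq => pc_BI P h d hq) σ hB
/-! ### selectExpand lemmas -/

lemma popGood_rest_length_le {b : WithTop ℚ} (l : List (Node V)) :
    (popGood h b l).2.1.length ≤ l.length := by
  rcases eq_or_ne l [] with rfl | hl
  · simp [popGood]
  · exact le_of_lt (popGood_rest_length h hl)

def seNone (σ : RS V) (i : ℕ) : RS V :=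
  { σ with openlists := σ.openlists.set i (popGood h (incCost σ) (σ.openlists.getD i [])).2.1,
           prunedCount := σ.prunedCount + (popGood h (incCost σ) (σ.openlists.getD i [])).2.2,
           emptySel := true }

def seMid (σ : RS V) (i : ℕ) (n : Node V) : RS V :=
  { σ with openlists := σ.openlists.set i (popGood h (incCost σ) (σ.openlists.getD i [])).2.1,
           prunedCount := σ.prunedCount + (popGood h (incCost σ) (σ.openlists.getD i [])).2.2,
           closed := fun v => if v = n.state then some n.g else σ.closed v,
           expCount := fun j => if j = σ.offset + i + 1 then σ.expCount j + 1 else σ.expCount j,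
           totalExp := σ.totalExp + 1 }

lemma se_cases (σ : RS V) (i : ℕ) :
    ((popGood h (incCost σ) (σ.openlists.getD i [])).1 = none ∧
      selectExpand P h d σ i = seNone h σ i) ∨
    (∃ n, (popGood h (incCost σ) (σ.openlists.getD i [])).1 = some n ∧
      selectExpand P h d σ i = expandNode P h d n (i + 1) (seMid h σ i n)) := by
  cases hsel : (popGood h (incCost σ) (σ.openlists.getD i [])).1 with
  | none =>
    refine Or.inl ⟨rfl, ?_⟩
    unfold selectExpand
    dsimp only
    rw [hsel]
    rfl
  | some n =>
    refine Or.inr ⟨n, rfl, ?_⟩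
    unfold selectExpand
    dsimp only
    rw [hsel]
    rfl

lemma mem_seNone_getD {σ : RS V} {i j : ℕ} {x : Node V}
    (hx : x ∈ (seNone h σ i).openlists.getD j []) :
    (j = i ∧ x ∈ σ.openlists.getD i []) ∨ x ∈ σ.openlists.getD j [] := by
  rcases mem_set_getD hx with ⟨rfl, hin⟩ | hold
  · exact Or.inl ⟨rfl, popGood_rest_mem h hin⟩
  · exact Or.inr hold

lemma mem_seMid_getD {σ : RS V} {i j : ℕ} {n : Node V} {x : Node V}
    (hx : x ∈ (seMid h σ i n).openlists.getD j []) :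
    (j = i ∧ x ∈ σ.openlists.getD i []) ∨ x ∈ σ.openlists.getD j [] := by
  rcases mem_set_getD hx with ⟨rfl, hin⟩ | hold
  · exact Or.inl ⟨rfl, popGood_rest_mem h hin⟩
  · exact Or.inr hold

lemma se_offset (σ : RS V) (i : ℕ) : (selectExpand P h d σ i).offset = σ.offset := by
  rcases se_cases P h d σ i with ⟨_, he⟩ | ⟨n, _, he⟩ <;> rw [he]
  · rfl
  · rw [en_offset]; rfl

lemma se_depth (σ : RS V) (i : ℕ) : (selectExpand P h d σ i).depth = σ.depth := by
  rcases se_cases P h d σ i with ⟨_, he⟩ | ⟨n, _, he⟩ <;> rw [he]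
  · rfl
  · rw [en_depth]; rfl

lemma se_isSome (σ : RS V) (i : ℕ) (hs : σ.incumbent.isSome = true) :
    (selectExpand P h d σ i).incumbent.isSome = true := by
  rcases se_cases P h d σ i with ⟨_, he⟩ | ⟨n, _, he⟩ <;> rw [he]
  · exact hs
  · exact en_isSome P h d _ _ _ hs

lemma se_incCost_le (hnonneg : ∀ v, 0 ≤ h v) (σ : RS V) (i : ℕ)
    {b : WithTop ℚ} (hb : incCost σ ≤ b) : incCost (selectExpand P h d σ i) ≤ b := by
  rcases se_cases P h d σ i with ⟨_, he⟩ | ⟨n, _, he⟩ <;> rw [he]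
  · rw [incCost_congr (show (seNone h σ i).incumbent = σ.incumbent from rfl)]; exact hb
  · exact en_incCost_le P h d hnonneg _ _ _
      (by rw [incCost_congr (show (seMid h σ i n).incumbent = σ.incumbent from rfl)]; exact hb)

lemma se_closed_isSome (σ : RS V) (i : ℕ) (v : V) (hs : (σ.closed v).isSome = true) :
    ((selectExpand P h d σ i).closed v).isSome = true := by
  rcases se_cases P h d σ i with ⟨_, he⟩ | ⟨n, _, he⟩ <;> rw [he]
  · exact hs
  · rw [en_closed]
    show ((if v = n.state then some n.g else σ.closed v)).isSome = true
    split
    · rfl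
    · exact hs

lemma se_len_ge (σ : RS V) (i : ℕ) :
    σ.openlists.length ≤ (selectExpand P h d σ i).openlists.length := by
  rcases se_cases P h d σ i with ⟨_, he⟩ | ⟨n, _, he⟩ <;> rw [he]
  · show σ.openlists.length ≤ (σ.openlists.set i _).length
    rw [List.length_set]
  · refine le_trans ?_ (en_len_ge P h d _ _ _)
    show σ.openlists.length ≤ (σ.openlists.set i _).length
    rw [List.length_set]

lemma se_getD0_eq (σ : RS V) {i : ℕ} (hi : i ≠ 0) :
    (selectExpand P h d σ i).openlists.getD 0 [] = σ.openlists.getD 0 [] := by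
  rcases se_cases P h d σ i with ⟨_, he⟩ | ⟨n, _, he⟩ <;> rw [he]
  · exact getD_set_ne hi
  · rw [en_getD_ne P h d _ _ (by omega : (0:ℕ) ≠ i + 1)]
    exact getD_set_ne hi

lemma se_len0_le (σ : RS V) (i : ℕ) :
    ((selectExpand P h d σ i).openlists.getD 0 []).length ≤ (σ.openlists.getD 0 []).length := by
  rcases eq_or_ne i 0 with rfl | hi
  · have hset : ∀ y : List (Node V), (σ.openlists.set 0 y).getD 0 [] = y ∨
        (σ.openlists.set 0 y).getD 0 [] = σ.openlists.getD 0 [] := by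
      intro y
      rcases lt_or_ge 0 σ.openlists.length with hlen | hlen
      · left; rw [List.getD_eq_getElem?_getD, List.getElem?_set_self hlen]; rfl
      · right; rw [List.set_eq_of_length_le hlen]
    rcases se_cases P h d σ 0 with ⟨_, he⟩ | ⟨n, _, he⟩ <;> rw [he]
    · show ((σ.openlists.set 0 _).getD 0 []).length ≤ _
      rcases hset _ with h' | h' <;> rw [h']
      exact popGood_rest_length_le h _
    · rw [en_getD_ne P h d _ _ (by omega : (0:ℕ) ≠ 0 + 1)]
      show ((σ.openlists.set 0 _).getD 0 []).length ≤ _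
      rcases hset _ with h' | h' <;> rw [h']
      exact popGood_rest_length_le h _
  · rw [se_getD0_eq P h d σ hi]

lemma se_len0_lt (σ : RS V) (hne : σ.openlists.getD 0 [] ≠ []) :
    ((selectExpand P h d σ 0).openlists.getD 0 []).length < (σ.openlists.getD 0 []).length := by
  have hlen : 0 < σ.openlists.length := by
    by_contra hc
    exact hne (getD_eq_nil_of_le (by omega))
  have hset : ∀ y : List (Node V), (σ.openlists.set 0 y).getD 0 [] = y := by
    intro y
    rw [List.getD_eq_getElem?_getD, List.getElem?_set_self hlen]; rfl
  rcases se_cases P h d σ 0 with ⟨_, he⟩ | ⟨n, _, he⟩ <;> rw [he]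
  · show ((σ.openlists.set 0 _).getD 0 []).length < _
    rw [hset]
    exact popGood_rest_length h hne
  · rw [en_getD_ne P h d _ _ (by omega : (0:ℕ) ≠ 0 + 1)]
    show ((σ.openlists.set 0 _).getD 0 []).length < _
    rw [hset]
    exact popGood_rest_length h hne

lemma se0_head_closed {σ : RS V} (hinc : σ.incumbent = none) {x : Node V} {rest : List (Node V)}
    (hfront : σ.openlists.getD 0 [] = x :: rest) :
    ((selectExpand P h d σ 0).closed x.state).isSome = true := by
  have hsel : (popGood h (incCost σ) (σ.openlists.getD 0 [])).1 = some x := by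
    rw [hfront, incCost_none hinc, popGood_top]
  rcases se_cases P h d σ 0 with ⟨hnone, _⟩ | ⟨n, hsome, he⟩
  · rw [hnone] at hsel; cases hsel
  · rw [hsome] at hsel
    injection hsel with hsel
    subst hsel
    rw [he, en_closed]
    show ((if n.state = n.state then some n.g else σ.closed n.state)).isSome = true
    rw [if_pos rfl]
    rfl

lemma se_LG {c0 : ℚ} (hcost : ∀ u v, v ∈ P.succ u → c0 ≤ P.cost u v)
    (σ : RS V) (i : ℕ) (hLG : LG c0 σ) : LG c0 (selectExpand P h d σ i) := by
  rcases se_cases P h d σ i with ⟨_, he⟩ | ⟨n, hsel, he⟩ <;> rw [he]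
  · intro j x hx
    rcases mem_seNone_getD h hx with ⟨rfl, hin⟩ | hold
    · exact hLG j x hin
    · exact hLG j x hold
  · have hmid : LG c0 (seMid h σ i n) := by
      intro j x hx
      rcases mem_seMid_getD h hx with ⟨rfl, hin⟩ | hold
      · exact hLG j x hin
      · exact hLG j x hold
    have hp : (((seMid h σ i n).offset + (i + 1) : ℕ) : ℚ) * c0 ≤ n.g := by
      have := hLG i n (popGood_sel_mem h hsel)
      have hoo : (seMid h σ i n).offset + (i + 1) = σ.offset + i + 1 := by
        show σ.offset + (i + 1) = σ.offset + i + 1; omega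
      rw [hoo]
      exact this
    exact en_LG P h d hcost hp hmid

lemma se_KP {B0 : ℚ} {Λ0 : ℕ} (hnonneg : ∀ v, 0 ≤ h v)
    (σ : RS V) (i : ℕ) (hK : KP h B0 Λ0 σ) : KP h B0 Λ0 (selectExpand P h d σ i) := by
  obtain ⟨hb, hmem⟩ := hK
  rcases se_cases P h d σ i with ⟨_, he⟩ | ⟨n, hsel, he⟩ <;> rw [he]
  · refine ⟨by rw [incCost_congr (show (seNone h σ i).incumbent = σ.incumbent from rfl)]; exact hb, ?_⟩
    intro j x hx
    rcases mem_seNone_getD h hx with ⟨rfl, hin⟩ | hold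
    · exact hmem j x hin
    · exact hmem j x hold
  · refine en_KP P h d hnonneg ⟨?_, ?_⟩
    · rw [incCost_congr (show (seMid h σ i n).incumbent = σ.incumbent from rfl)]; exact hb
    · intro j x hx
      rcases mem_seMid_getD h hx with ⟨rfl, hin⟩ | hold
      · exact hmem j x hin
      · exact hmem j x hold

lemma se_BI {m : ℚ} {S : V → Prop} (σ : RS V) (i : ℕ) (hB : BI m S σ)
    (hanc : ∀ v, ((selectExpand P h d σ i).closed v).isSome = true → S v) :
    BI m S (selectExpand P h d σ i) := by
  obtain ⟨h1, h2, h3⟩ := hB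
  rcases se_cases P h d σ i with ⟨_, he⟩ | ⟨n, hsel, he⟩
  · rw [he]
    refine ⟨h1, ?_, h3⟩
    intro j x hx hsome
    rcases mem_seNone_getD h hx with ⟨rfl, hin⟩ | hold
    · exact h2 j x hin hsome
    · exact h2 j x hold hsome
  · -- the selected node's state is already closed, thanks to the anchor
    have hnses : ((selectExpand P h d σ i).closed n.state).isSome = true := by
      rw [he, en_closed]
      show ((if n.state = n.state then some n.g else σ.closed n.state)).isSome = true
      rw [if_pos rfl]; rfl
    have hnS : S n.state := hanc _ hnses
    have hnσ : (σ.closed n.state).isSome = true := (h3 n.state).mpr hnS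
    have hng : n.g ≤ m := h2 i n (popGood_sel_mem h hsel) hnσ
    rw [he]
    refine en_BI P h d ⟨?_, ?_, ?_⟩
    · intro v g hv
      rw [show (seMid h σ i n).closed v = if v = n.state then some n.g else σ.closed v from rfl] at hv
      by_cases hvn : v = n.state
      · rw [if_pos hvn] at hv
        injection hv with hv
        rw [← hv]; exact hng
      · rw [if_neg hvn] at hv
        exact h1 v g hv
    · intro j x hx hsome
      rw [show (seMid h σ i n).closed x.state
          = if x.state = n.state then some n.g else σ.closed x.state from rfl] at hsome
      have hmem : x ∈ σ.openlists.getD j [] ∨ x ∈ σ.openlists.getD i [] := by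
        rcases mem_seMid_getD h hx with ⟨rfl, hin⟩ | hold
        · exact Or.inl hin
        · exact Or.inl hold
      by_cases hvn : x.state = n.state
      · have hs' : (σ.closed x.state).isSome = true := by rw [hvn]; exact hnσ
        rcases hmem with hm | hm
        · exact h2 j x hm hs'
        · exact h2 i x hm hs'
      · rw [if_neg hvn] at hsome
        rcases hmem with hm | hm
        · exact h2 j x hm hsome
        · exact h2 i x hm hsome
    · intro v
      rw [show (seMid h σ i n).closed v = if v = n.state then some n.g else σ.closed v from rfl]
      by_cases hvn : v = n.state
      · rw [if_pos hvn]
        exact iff_of_true rfl (hvn ▸ hnS)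
      · rw [if_neg hvn]
        exact h3 v
/-! ### trim lemmas -/

lemma trimFront_snd : ∀ (l : List (List (Node V))), (trimFront l).2 = l.drop (trimFront l).1
  | [] => rfl
  | [] :: rest => by
    show (trimFront rest).2 = ([] :: rest).drop ((trimFront rest).1 + 1)
    rw [List.drop_succ_cons]
    exact trimFront_snd rest
  | (y :: ys) :: rest => rfl

lemma trimFront_head : ∀ (l : List (List (Node V))) (z : List (Node V)),
    (trimFront l).2.head? = some z → z ≠ []
  | [], z => by intro hz; cases hz
  | [] :: rest, z => fun hz => trimFront_head rest z hz
  | (y :: ys) :: rest, z => by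
    intro hz
    injection hz with hz
    rw [← hz]
    exact List.cons_ne_nil _ _

lemma ttrim_prefix (l : List (List (Node V))) :
    (l.reverse.dropWhile List.isEmpty).reverse <+: l := by
  have h1 : l.reverse.dropWhile List.isEmpty <:+ l.reverse := List.dropWhile_suffix _
  have h2 := List.reverse_prefix.2 h1
  rw [List.reverse_reverse] at h2
  exact h2

lemma prefix_getD {l₁ l₂ : List (List (Node V))} (hp : l₁ <+: l₂) {i : ℕ} {x : Node V}
    (hx : x ∈ l₁.getD i []) : x ∈ l₂.getD i [] := by
  obtain ⟨t, rfl⟩ := hp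
  have hi : i < l₁.length := by
    by_contra hc
    rw [getD_eq_nil_of_le (le_of_not_gt hc)] at hx
    exact absurd hx (List.not_mem_nil)
  rw [List.getD_eq_getElem?_getD, List.getElem?_append_left hi, ← List.getD_eq_getElem?_getD]
  exact hx

lemma prefix_head?_eq {l₁ l₂ : List (List (Node V))} (hp : l₁ <+: l₂) (hne : l₁ ≠ []) :
    l₂.head? = l₁.head? := by
  obtain ⟨t, rfl⟩ := hp
  rw [List.head?_append]
  cases l₁ with
  | nil => exact absurd rfl hne
  | cons y t' => rfl

lemma ttrim_ne_nil {l : List (List (Node V))} {z : List (Node V)}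
    (hz : l.head? = some z) (hzne : z ≠ []) :
    (l.reverse.dropWhile List.isEmpty).reverse ≠ [] := by
  intro hc
  have h0 : l.reverse.dropWhile List.isEmpty = [] := by
    have := congrArg List.reverse hc
    simpa using this
  have hall := List.dropWhile_eq_nil_iff.1 h0
  have hzl : z ∈ l := by
    cases l with
    | nil => cases hz
    | cons y t => injection hz with hz; rw [← hz]; exact List.mem_cons_self
  have := hall z (List.mem_reverse.2 hzl)
  exact hzne (by simpa [List.isEmpty_iff] using this)

lemma getD0_eq_head {l : List (List (Node V))} {z : List (Node V)} (hz : l.head? = some z) :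
    l.getD 0 [] = z := by
  cases l with
  | nil => cases hz
  | cons y t =>
    have h1 : y = z := by simpa using hz
    simpa [List.getD_cons_zero] using h1

@[simp] lemma trim_closed (σ : RS V) : (trim σ).closed = σ.closed := rfl
@[simp] lemma trim_incumbent (σ : RS V) : (trim σ).incumbent = σ.incumbent := rfl
@[simp] lemma trim_depth (σ : RS V) : (trim σ).depth = σ.depth := rfl
lemma trim_offset (σ : RS V) : (trim σ).offset = σ.offset + (trimFront σ.openlists).1 := rfl
lemma trim_openlists (σ : RS V) :
    (trim σ).openlists = ((trimFront σ.openlists).2.reverse.dropWhile List.isEmpty).reverse := rfl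

lemma trim_mem_getD {σ : RS V} {i : ℕ} {x : Node V}
    (hx : x ∈ (trim σ).openlists.getD i []) :
    x ∈ σ.openlists.getD (i + (trimFront σ.openlists).1) [] := by
  have h1 : x ∈ (trimFront σ.openlists).2.getD i [] := by
    refine prefix_getD (ttrim_prefix _) ?_
    rw [← trim_openlists]
    exact hx
  rw [trimFront_snd] at h1
  rw [List.getD_eq_getElem?_getD, List.getElem?_drop] at h1
  rw [List.getD_eq_getElem?_getD, Nat.add_comm]
  exact h1

def TrimmedP (σ : RS V) : Prop := ∀ z, σ.openlists.head? = some z → z ≠ []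

lemma trim_trimmed (σ : RS V) : TrimmedP (trim σ) := by
  intro z hz
  have hwne : (trim σ).openlists ≠ [] := by
    intro hc
    rw [hc] at hz
    cases hz
  have hpre : (trim σ).openlists <+: (trimFront σ.openlists).2 := by
    rw [trim_openlists]
    exact ttrim_prefix _
  have hh : (trimFront σ.openlists).2.head? = some z := by
    rw [prefix_head?_eq hpre hwne]
    exact hz
  exact trimFront_head σ.openlists z hh

lemma trim_LG {c0 : ℚ} {σ : RS V} (hLG : LG c0 σ) : LG c0 (trim σ) := by
  intro i x hx
  have hm := trim_mem_getD hx
  have hcoef : (trim σ).offset + i + 1 = σ.offset + (i + (trimFront σ.openlists).1) + 1 := by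
    rw [trim_offset]; omega
  rw [hcoef]
  exact hLG _ x hm

lemma trim_KP {B0 : ℚ} {Λ0 : ℕ} {σ : RS V} (hK : KP h B0 Λ0 σ) : KP h B0 Λ0 (trim σ) := by
  obtain ⟨hb, hmem⟩ := hK
  refine ⟨by rw [incCost_congr (trim_incumbent σ)]; exact hb, ?_⟩
  intro i x hx
  have hm := trim_mem_getD hx
  have hcoef : (trim σ).offset + i = σ.offset + (i + (trimFront σ.openlists).1) := by
    rw [trim_offset]; omega
  rw [hcoef]
  exact hmem _ x hm

lemma trim_BI {m : ℚ} {S : V → Prop} {σ : RS V} (hB : BI m S σ) : BI m S (trim σ) := by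
  obtain ⟨h1, h2, h3⟩ := hB
  refine ⟨h1, ?_, h3⟩
  intro i x hx hsome
  exact h2 _ x (trim_mem_getD hx) hsome

/-! ### mainIter lemmas -/

lemma done_iff (σ : RS V) : Done σ ↔ σ.openlists.all List.isEmpty = true := by
  simp [Done, List.all_eq_true, List.isEmpty_iff]

noncomputable def iterBody (a : ℕ) (σ : RS V) : RS V :=
  let L := σ.openlists.length
  let D := σ.depth
  let σ1 := (List.range (L - 1)).foldl (selectExpand P h d) σ
  let σ2 := { σ1 with openlists := σ1.openlists ++ List.replicate a [] }
  let σ3 := (List.range a).foldl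
      (fun σ' k => (List.range D).foldl
        (fun σ'' _ => selectExpand P h d σ'' (L - 1 + k)) σ') σ2
  trim { σ3 with depth := σ3.depth + a }

lemma mainIter_eq {a : ℕ} {σ : RS V} (hnd : ¬ σ.openlists.all List.isEmpty = true) :
    mainIter P h d a σ = iterBody P h d a σ := by
  rw [mainIter, if_neg hnd]
  rfl

lemma iterBody_pres {a : ℕ} {Q : RS V → Prop}
    (hse : ∀ σ i, Q σ → Q (selectExpand P h d σ i))
    (happend : ∀ σ, Q σ → Q { σ with openlists := σ.openlists ++ List.replicate a [] })
    (hdepth : ∀ σ, Q σ → Q { σ with depth := σ.depth + a })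
    (htrim : ∀ σ, Q σ → Q (trim σ))
    (σ : RS V) (hQ : Q σ) : Q (iterBody P h d a σ) := by
  unfold iterBody
  have h1 : Q ((List.range (σ.openlists.length - 1)).foldl (selectExpand P h d) σ) :=
    foldl_pres _ (fun σ' j _ hq => hse σ' j hq) σ hQ
  have h2 := happend _ h1
  have h3 := foldl_pres
    (f := fun σ' k => (List.range σ.depth).foldl
      (fun σ'' _ => selectExpand P h d σ'' (σ.openlists.length - 1 + k)) σ')
    (List.range a)
    (fun σ' k _ hq => foldl_pres
      (f := fun σ'' (_ : ℕ) => selectExpand P h d σ'' (σ.openlists.length - 1 + k))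
      (List.range σ.depth)
      (fun σ'' j _ hq' => hse σ'' (σ.openlists.length - 1 + k) hq') σ' hq) _ h2
  exact htrim _ (hdepth _ h3)

lemma mainIter_pres {a : ℕ} {Q : RS V → Prop}
    (hse : ∀ σ i, Q σ → Q (selectExpand P h d σ i))
    (happend : ∀ σ, Q σ → Q { σ with openlists := σ.openlists ++ List.replicate a [] })
    (hdepth : ∀ σ, Q σ → Q { σ with depth := σ.depth + a })
    (htrim : ∀ σ, Q σ → Q (trim σ))
    (σ : RS V) (hQ : Q σ) : Q (mainIter P h d a σ) := by
  by_cases hnd : σ.openlists.all List.isEmpty = true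
  · rw [mainIter, if_pos hnd]
    exact hQ
  · rw [mainIter_eq P h d hnd]
    exact iterBody_pres P h d hse happend hdepth htrim σ hQ

lemma mainIter_LG {c0 : ℚ} {a : ℕ} (hcost : ∀ u v, v ∈ P.succ u → c0 ≤ P.cost u v)
    {σ : RS V} (hLG : LG c0 σ) : LG c0 (mainIter P h d a σ) := by
  refine mainIter_pres P h d (fun σ' i hq => se_LG P h d hcost σ' i hq) ?_ ?_
    (fun σ' hq => trim_LG hq) σ hLG
  · intro σ' hq i x hx
    have hx' : x ∈ σ'.openlists.getD i [] := by
      rw [← getD_append_replicate σ'.openlists a i]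
      exact hx
    exact hq i x hx'
  · intro σ' hq i x hx
    exact hq i x hx

lemma mainIter_KP {B0 : ℚ} {Λ0 : ℕ} {a : ℕ} (hnonneg : ∀ v, 0 ≤ h v)
    {σ : RS V} (hK : KP h B0 Λ0 σ) : KP h B0 Λ0 (mainIter P h d a σ) := by
  refine mainIter_pres P h d (fun σ' i hq => se_KP P h d hnonneg σ' i hq) ?_ ?_
    (fun σ' hq => trim_KP h hq) σ hK
  · rintro σ' ⟨hb, hmem⟩
    refine ⟨hb, ?_⟩
    intro i x hx
    have hx' : x ∈ σ'.openlists.getD i [] := by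
      rw [← getD_append_replicate σ'.openlists a i]
      exact hx
    exact hmem i x hx'
  · rintro σ' ⟨hb, hmem⟩
    exact ⟨hb, fun i x hx => hmem i x hx⟩

lemma mainIter_depth_ge {a : ℕ} {σ : RS V} (hd1 : 1 ≤ σ.depth) :
    1 ≤ (mainIter P h d a σ).depth := by
  refine mainIter_pres P h d (Q := fun σ' => 1 ≤ σ'.depth) (fun σ' i hq => ?_) (fun σ' hq => hq) (fun σ' hq => ?_)
    (fun σ' hq => hq) σ hd1
  · rw [se_depth]; exact hq
  · show 1 ≤ σ'.depth + a
    omega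

lemma mainIter_offset_ge {a : ℕ} {σ : RS V} {b : ℕ} (hb : b ≤ σ.offset) :
    b ≤ (mainIter P h d a σ).offset := by
  refine mainIter_pres P h d (Q := fun σ' => b ≤ σ'.offset) (fun σ' i hq => ?_) (fun σ' hq => hq) (fun σ' hq => hq)
    (fun σ' hq => ?_) σ hb
  · rw [se_offset]; exact hq
  · rw [trim_offset]; omega

lemma mainIter_closed_isSome {a : ℕ} {σ : RS V} {v : V} (hs : (σ.closed v).isSome = true) :
    ((mainIter P h d a σ).closed v).isSome = true := by
  refine mainIter_pres P h d (Q := fun σ' => (σ'.closed v).isSome = true) (fun σ' i hq => se_closed_isSome P h d σ' i v hq)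
    (fun σ' hq => hq) (fun σ' hq => hq) (fun σ' hq => hq) σ hs

lemma mainIter_isSome {a : ℕ} {σ : RS V} (hs : σ.incumbent.isSome = true) :
    (mainIter P h d a σ).incumbent.isSome = true := by
  refine mainIter_pres P h d (Q := fun σ' => σ'.incumbent.isSome = true) (fun σ' i hq => se_isSome P h d σ' i hq)
    (fun σ' hq => hq) (fun σ' hq => hq) (fun σ' hq => hq) σ hs

lemma mainIter_incCost_le {a : ℕ} (hnonneg : ∀ v, 0 ≤ h v) {σ : RS V} {b : WithTop ℚ}
    (hb : incCost σ ≤ b) : incCost (mainIter P h d a σ) ≤ b := by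
  refine mainIter_pres P h d (Q := fun σ' => incCost σ' ≤ b) (fun σ' i hq => se_incCost_le P h d hnonneg σ' i hq)
    (fun σ' hq => ?_) (fun σ' hq => ?_) (fun σ' hq => ?_) σ hb
  · rw [incCost_congr (show ({ σ' with openlists := σ'.openlists ++ List.replicate a [] } : RS V).incumbent = σ'.incumbent from rfl)]
    exact hq
  · rw [incCost_congr (show ({ σ' with depth := σ'.depth + a } : RS V).incumbent = σ'.incumbent from rfl)]
    exact hq
  · rw [incCost_congr (trim_incumbent σ')]
    exact hq
/-! ### phases of the main iteration -/

noncomputable def phase1 (σ : RS V) : RS V :=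
  (List.range (σ.openlists.length - 1)).foldl (selectExpand P h d) σ

noncomputable def phase2 (a : ℕ) (σ : RS V) : RS V :=
  { phase1 P h d σ with openlists := (phase1 P h d σ).openlists ++ List.replicate a [] }

noncomputable def outerStep (L D : ℕ) (σ' : RS V) (k : ℕ) : RS V :=
  (List.range D).foldl (fun σ'' _ => selectExpand P h d σ'' (L - 1 + k)) σ'

noncomputable def phase3 (a : ℕ) (σ : RS V) : RS V :=
  (List.range a).foldl (outerStep P h d σ.openlists.length σ.depth) (phase2 P h d a σ)

lemma iterBody_eq (a : ℕ) (σ : RS V) :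
    iterBody P h d a σ
      = trim { phase3 P h d a σ with depth := (phase3 P h d a σ).depth + a } := rfl

lemma front_exists {σ : RS V} (hnd : ¬ σ.openlists.all List.isEmpty = true) (htr : TrimmedP σ) :
    ∃ x rest, σ.openlists.getD 0 [] = x :: rest := by
  have hlne : σ.openlists ≠ [] := fun hc => hnd (by rw [hc]; rfl)
  obtain ⟨l0, hl0⟩ : ∃ l0, σ.openlists.head? = some l0 := by
    cases hL : σ.openlists with
    | nil => exact absurd hL hlne
    | cons y t => exact ⟨y, rfl⟩
  have hl0ne : l0 ≠ [] := htr l0 hl0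
  obtain ⟨x, rest, rfl⟩ : ∃ x rest, l0 = x :: rest := by
    cases l0 with
    | nil => exact absurd rfl hl0ne
    | cons x r => exact ⟨x, r, rfl⟩
  exact ⟨x, rest, getD0_eq_head hl0⟩

lemma phase3_main {a : ℕ} {σ : RS V} {x : Node V} {rest : List (Node V)}
    (hfront : σ.openlists.getD 0 [] = x :: rest) (hdep : 1 ≤ σ.depth) (ha : 1 ≤ a) :
    (phase3 P h d a σ).offset = σ.offset ∧
    ((phase3 P h d a σ).openlists.getD 0 []).length < (σ.openlists.getD 0 []).length ∧
    1 ≤ (phase3 P h d a σ).openlists.length ∧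
    (σ.incumbent = none → ((phase3 P h d a σ).closed x.state).isSome = true) := by
  have hfne : σ.openlists.getD 0 [] ≠ [] := by
    rw [hfront]; exact List.cons_ne_nil _ _
  have hlen0 : 0 < σ.openlists.length := by
    by_contra hc
    exact hfne (getD_eq_nil_of_le (by omega))
  -- the carried predicate
  set Q : RS V → Prop := fun σ' => σ'.offset = σ.offset ∧
      (σ'.openlists.getD 0 []).length < (σ.openlists.getD 0 []).length ∧
      1 ≤ σ'.openlists.length ∧
      (σ.incumbent = none → (σ'.closed x.state).isSome = true) with hQdef
  have hQse : ∀ σ' (i : ℕ), Q σ' → Q (selectExpand P h d σ' i) := by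
    intro σ' i hq
    obtain ⟨q1, q2, q3, q4⟩ := hq
    refine ⟨?_, ?_, ?_, ?_⟩
    · rw [se_offset]; exact q1
    · exact lt_of_le_of_lt (se_len0_le P h d σ' i) q2
    · exact le_trans q3 (se_len_ge P h d σ' i)
    · exact fun hn => se_closed_isSome P h d σ' i _ (q4 hn)
  have hQappend : ∀ σ', Q σ' → Q { σ' with openlists := σ'.openlists ++ List.replicate a [] } := by
    intro σ' hq
    obtain ⟨q1, q2, q3, q4⟩ := hq
    refine ⟨q1, ?_, ?_, q4⟩
    · show (((σ'.openlists ++ List.replicate a []).getD 0 [])).length < _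
      rw [getD_append_replicate]
      exact q2
    · show 1 ≤ (σ'.openlists ++ List.replicate a []).length
      rw [List.length_append]
      omega
  suffices hQ3 : Q (phase3 P h d a σ) by
    exact ⟨hQ3.1, hQ3.2.1, hQ3.2.2.1, hQ3.2.2.2⟩
  obtain ⟨a', rfl⟩ : ∃ a', a = a' + 1 := ⟨a - 1, by omega⟩
  obtain ⟨D', hD⟩ : ∃ D', σ.depth = D' + 1 := ⟨σ.depth - 1, by omega⟩
  rcases (by omega : σ.openlists.length = 1 ∨ 2 ≤ σ.openlists.length) with hL1 | hL2
  · -- single open list: the first pop happens in step (iii)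
    have hp1 : phase1 P h d σ = σ := by
      unfold phase1
      rw [hL1]
      rfl
    have hQ2' : (phase2 P h d (a' + 1) σ).openlists.getD 0 [] = x :: rest ∧
        (phase2 P h d (a' + 1) σ).offset = σ.offset ∧
        (phase2 P h d (a' + 1) σ).incumbent = σ.incumbent ∧
        (phase2 P h d (a' + 1) σ).closed = σ.closed ∧
        1 ≤ (phase2 P h d (a' + 1) σ).openlists.length := by
      unfold phase2
      rw [hp1]
      refine ⟨?_, rfl, rfl, rfl, ?_⟩
      · show ((σ.openlists ++ List.replicate (a' + 1) []).getD 0 []) = x :: rest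
        rw [getD_append_replicate]
        exact hfront
      · show 1 ≤ (σ.openlists ++ List.replicate (a' + 1) []).length
        rw [List.length_append]
        omega
    obtain ⟨hf2, ho2, hi2, hc2, hl2⟩ := hQ2'
    -- Q holds after the very first select-and-expand
    have hQτ : Q (selectExpand P h d (phase2 P h d (a' + 1) σ) (σ.openlists.length - 1 + 0)) := by
      rw [show σ.openlists.length - 1 + 0 = 0 from by omega]
      refine ⟨?_, ?_, ?_, ?_⟩
      · rw [se_offset]; exact ho2
      · refine lt_of_lt_of_le (se_len0_lt P h d _ (by rw [hf2]; exact List.cons_ne_nil _ _)) ?_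
        rw [hf2, hfront]
      · exact le_trans hl2 (se_len_ge P h d _ _)
      · intro hn
        exact se0_head_closed P h d (by rw [hi2]; exact hn) hf2
    unfold phase3
    rw [List.range_succ_eq_map, List.foldl_cons]
    refine foldl_pres (f := outerStep P h d σ.openlists.length σ.depth) _
      (fun σ' k _ hq => foldl_pres
        (f := fun σ'' (_ : ℕ) => selectExpand P h d σ'' (σ.openlists.length - 1 + k))
        (List.range σ.depth) (fun σ'' j _ hq' => hQse σ'' _ hq') σ' hq) _ ?_
    -- first outer step
    show Q (outerStep P h d σ.openlists.length σ.depth (phase2 P h d (a' + 1) σ) 0)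
    unfold outerStep
    rw [hD, List.range_succ_eq_map, List.foldl_cons]
    exact foldl_pres
      (f := fun σ'' (_ : ℕ) => selectExpand P h d σ'' (σ.openlists.length - 1 + 0))
      _ (fun σ'' j _ hq' => hQse σ'' _ hq') _ hQτ
  · -- at least two open lists: the first pop happens in step (i)
    obtain ⟨L'', hL''⟩ : ∃ n, σ.openlists.length - 1 = n + 1 := ⟨σ.openlists.length - 2, by omega⟩
    have hQτ : Q (selectExpand P h d σ 0) := by
      refine ⟨?_, ?_, ?_, ?_⟩
      · rw [se_offset]
      · exact se_len0_lt P h d σ hfne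
      · exact le_trans (by omega) (se_len_ge P h d σ 0)
      · intro hn
        exact se0_head_closed P h d hn hfront
    have hQ1 : Q (phase1 P h d σ) := by
      unfold phase1
      rw [hL'', List.range_succ_eq_map, List.foldl_cons]
      exact foldl_pres (f := selectExpand P h d) _
        (fun σ'' j _ hq' => hQse σ'' _ hq') _ hQτ
    have hQ2 : Q (phase2 P h d (a' + 1) σ) := hQappend _ hQ1
    unfold phase3
    exact foldl_pres (f := outerStep P h d σ.openlists.length σ.depth) _
      (fun σ' k _ hq => foldl_pres
        (f := fun σ'' (_ : ℕ) => selectExpand P h d σ'' (σ.openlists.length - 1 + k))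
        (List.range σ.depth) (fun σ'' j _ hq' => hQse σ'' _ hq') σ' hq) _ hQ2

lemma mainIter_trimmed {a : ℕ} {σ : RS V} (hnd : ¬ σ.openlists.all List.isEmpty = true) :
    TrimmedP (mainIter P h d a σ) := by
  rw [mainIter_eq P h d hnd, iterBody_eq]
  exact trim_trimmed _

lemma mainIter_progress {a : ℕ} {σ : RS V} (hnd : ¬ σ.openlists.all List.isEmpty = true)
    (htr : TrimmedP σ) (hdep : 1 ≤ σ.depth) (ha : 1 ≤ a) :
    σ.offset < (mainIter P h d a σ).offset ∨
    ((mainIter P h d a σ).offset = σ.offset ∧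
      ((mainIter P h d a σ).openlists.getD 0 []).length < (σ.openlists.getD 0 []).length) := by
  obtain ⟨x, rest, hfr⟩ := front_exists hnd htr
  obtain ⟨hoff3, hlen3, hlenlists, _⟩ := phase3_main P h d hfr hdep ha
  rw [mainIter_eq P h d hnd, iterBody_eq]
  set X : RS V := { phase3 P h d a σ with depth := (phase3 P h d a σ).depth + a } with hX
  have hXoff : X.offset = σ.offset := hoff3
  have hXlen0 : (X.openlists.getD 0 []).length < (σ.openlists.getD 0 []).length := hlen3
  have hXlen : 1 ≤ X.openlists.length := hlenlists
  obtain ⟨y, t, hXeq⟩ : ∃ y t, X.openlists = y :: t := by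
    cases hXc : X.openlists with
    | nil => rw [hXc] at hXlen; simp at hXlen
    | cons y t => exact ⟨y, t, rfl⟩
  have hhead : X.openlists.head? = some y := by rw [hXeq]; rfl
  have hgd : X.openlists.getD 0 [] = y := getD0_eq_head hhead
  by_cases hy : y = []
  · left
    rw [trim_offset, hXoff]
    have h1 : (trimFront X.openlists).1 = (trimFront t).1 + 1 := by
      rw [hXeq, hy]
      rfl
    omega
  · right
    have htf : trimFront X.openlists = (0, X.openlists) := by
      rw [hXeq]
      cases y with
      | nil => exact absurd rfl hy
      | cons z zs => rfl
    constructor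
    · rw [trim_offset, htf, hXoff]
      rfl
    · have hwne : (trim X).openlists ≠ [] := by
        rw [trim_openlists, htf]
        exact ttrim_ne_nil hhead hy
      have hpre : (trim X).openlists <+: (trimFront X.openlists).2 := by
        rw [trim_openlists]
        exact ttrim_prefix _
      have hh2 : (trim X).openlists.head? = some y := by
        rw [← prefix_head?_eq hpre hwne, htf]
        exact hhead
      rw [getD0_eq_head hh2, ← hgd]
      exact hXlen0

lemma mainIter_headClosed {a : ℕ} {σ : RS V} (hnd : ¬ σ.openlists.all List.isEmpty = true)
    (htr : TrimmedP σ) (hdep : 1 ≤ σ.depth) (ha : 1 ≤ a) (hinc : σ.incumbent = none) :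
    ∃ x rest, σ.openlists.getD 0 [] = x :: rest ∧
      ((mainIter P h d a σ).closed x.state).isSome = true := by
  obtain ⟨x, rest, hfr⟩ := front_exists hnd htr
  obtain ⟨_, _, _, hcl⟩ := phase3_main P h d hfr hdep ha
  refine ⟨x, rest, hfr, ?_⟩
  rw [mainIter_eq P h d hnd, iterBody_eq]
  exact hcl hinc

/-! ### anchored preservation of BI through the main iteration -/

def ACL (S : V → Prop) (σ : RS V) : Prop := ∃ v, (σ.closed v).isSome = true ∧ ¬ S v

lemma mainIter_BI {a : ℕ} {m : ℚ} {S : V → Prop} {σ : RS V} (hB : BI m S σ)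
    (hanc : ∀ v, ((mainIter P h d a σ).closed v).isSome = true → S v) :
    BI m S (mainIter P h d a σ) := by
  classical
  by_cases hnd : σ.openlists.all List.isEmpty = true
  · rw [mainIter, if_pos hnd]
    exact hB
  rw [mainIter_eq P h d hnd, iterBody_eq] at hanc ⊢
  have habs : ∀ σ' (i : ℕ), ACL S σ' → ACL S (selectExpand P h d σ' i) := by
    rintro σ' i ⟨v, hv, hnv⟩
    exact ⟨v, se_closed_isSome P h d σ' i v hv, hnv⟩
  have hnA3 : ¬ ACL S (phase3 P h d a σ) := by
    rintro ⟨v, hv, hnv⟩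
    exact hnv (hanc v hv)
  have habsOuter : ∀ σ' (k : ℕ), ACL S σ' → ACL S (outerStep P h d σ.openlists.length σ.depth σ' k) := by
    intro σ' k hA
    exact foldl_pres
      (f := fun σ'' (_ : ℕ) => selectExpand P h d σ'' (σ.openlists.length - 1 + k))
      _ (fun σ'' j _ hq' => habs σ'' _ hq') σ' hA
  have hnA2 : ¬ ACL S (phase2 P h d a σ) := by
    intro hA
    exact hnA3 (foldl_pres (f := outerStep P h d σ.openlists.length σ.depth) _
      (fun σ' k _ hq => habsOuter σ' k hq) _ hA)
  have hnA1 : ¬ ACL S (phase1 P h d σ) := fun hA => hnA2 hA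
  have hB1 : BI m S (phase1 P h d σ) := by
    refine foldl_anchored (Q := BI m S) (A := ACL S) (f := selectExpand P h d)
      (fun σ' j hA => habs σ' j hA) _ (fun σ' j _ hq hnA => ?_) σ hB hnA1
    refine se_BI P h d σ' j hq ?_
    intro v hv
    by_contra hns
    exact hnA ⟨v, hv, hns⟩
  have hB2 : BI m S (phase2 P h d a σ) := by
    obtain ⟨h1, h2, h3⟩ := hB1
    refine ⟨h1, ?_, h3⟩
    intro i x hx hsome
    refine h2 i x ?_ hsome
    have hx' : x ∈ ((phase1 P h d σ).openlists ++ List.replicate a []).getD i [] := hx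
    rw [getD_append_replicate] at hx'
    exact hx'
  have hB3 : BI m S (phase3 P h d a σ) := by
    refine foldl_anchored (Q := BI m S) (A := ACL S)
      (f := outerStep P h d σ.openlists.length σ.depth)
      (fun σ' k hA => habsOuter σ' k hA) _ (fun σ' k _ hq hnA => ?_) _ hB2 hnA3
    refine foldl_anchored (Q := BI m S) (A := ACL S)
      (f := fun σ'' (_ : ℕ) => selectExpand P h d σ'' (σ.openlists.length - 1 + k))
      (fun σ'' j hA => habs σ'' _ hA) _ (fun σ'' j _ hq' hnA' => ?_) σ' hq hnA
    refine se_BI P h d σ'' _ hq' ?_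
    intro v hv
    by_contra hns
    exact hnA' ⟨v, hv, hns⟩
  exact trim_BI hB3
/-! ### odds and ends -/

lemma mem_join_of_getD {l : List (List (Node V))} {i : ℕ} {x : Node V}
    (hx : x ∈ l.getD i []) : x ∈ l.flatten := by
  rcases hgd : l[i]? with _ | y
  · rw [List.getD_eq_getElem?_getD, hgd] at hx
    simp at hx
  · rw [List.getD_eq_getElem?_getD, hgd] at hx
    exact List.mem_flatten.2 ⟨y, List.mem_of_getElem? hgd, hx⟩

lemma exists_c0 [Fintype V] (hpos : EdgeCostsPos P) :
    ∃ c0 : ℚ, 0 < c0 ∧ ∀ u v, v ∈ P.succ u → c0 ≤ P.cost u v := by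
  classical
  set S : Finset ℚ := ((Finset.univ : Finset V).sigma fun u : V => P.succ u).image
    (fun p => P.cost p.1 p.2) with hS
  refine ⟨(insert 1 S).min' ⟨1, Finset.mem_insert_self _ _⟩, ?_, ?_⟩
  · have hmem := Finset.min'_mem (insert 1 S) ⟨1, Finset.mem_insert_self _ _⟩
    rcases Finset.mem_insert.1 hmem with hm | hm
    · rw [hm]; norm_num
    · obtain ⟨p, hp, hpe⟩ := Finset.mem_image.1 hm
      rw [← hpe]
      exact hpos p.1 p.2 (Finset.mem_sigma.1 hp).2
  · intro u v hv
    apply Finset.min'_le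
    exact Finset.mem_insert_of_mem
      (Finset.mem_image.2 ⟨⟨u, v⟩, Finset.mem_sigma.2 ⟨Finset.mem_univ u, hv⟩, rfl⟩)

lemma mono_bdd_eventually_const (f : ℕ → ℕ) (hmono : ∀ s t, s ≤ t → f s ≤ f t) (c : ℕ)
    (hbd : ∀ t, f t ≤ c) : ∃ T, ∀ t, T ≤ t → f t = f T := by
  by_contra hc
  push_neg at hc
  have grow : ∀ k, ∃ t, k ≤ f t := by
    intro k
    induction k with
    | zero => exact ⟨0, Nat.zero_le _⟩
    | succ k ih =>
      obtain ⟨t, ht⟩ := ih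
      obtain ⟨t', ht', hne⟩ := hc t
      have := hmono t t' ht'
      exact ⟨t', by omega⟩
  obtain ⟨t, ht⟩ := grow (c + 1)
  exact absurd (hbd t) (by omega)

/-! ### the initial state -/

lemma insertOpen_single {σ : RS V} {l : List (Node V)} (hl : σ.openlists = [l]) (n : Node V) :
    (insertOpen d σ 0 n).openlists = [insertByD d n l] := by
  show (padTo σ.openlists 1).set 0 (insertByD d n ((padTo σ.openlists 1).getD 0 [])) = _
  rw [hl]
  rfl

lemma initRS_openlists : ∃ l0, (initRS P h d).openlists = [l0] := by
  unfold initRS expandNode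
  refine foldl_pres (Q := fun σ' => ∃ l, σ'.openlists = [l])
    (f := processChild P h d ⟨P.start, 0, [P.start]⟩ 0) _
    (fun σ' c _ hq => ?_) _ ⟨[], rfl⟩
  obtain ⟨l, hl⟩ := hq
  rcases pc_cases P h d ⟨P.start, 0, [P.start]⟩ 0 σ' c with he | ⟨_, he | ⟨he, _⟩⟩
  · exact ⟨l, by rw [he]; exact hl⟩
  · exact ⟨l, by rw [he]; exact hl⟩
  · exact ⟨_, by rw [he]; exact insertOpen_single d hl _⟩

lemma initRS_LG {c0 : ℚ} (hcost : ∀ u v, v ∈ P.succ u → c0 ≤ P.cost u v) :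
    LG c0 (initRS P h d) := by
  unfold initRS
  refine en_LG P h d hcost ?_ ?_
  · show ((0 + 0 : ℕ) : ℚ) * c0 ≤ (0 : ℚ)
    norm_num
  · intro i x hx
    exfalso
    have hx' : x ∈ ([[]] : List (List (Node V))).getD i [] := hx
    have hnil : ([[]] : List (List (Node V))).getD i [] = [] := by
      cases i with
      | zero => rfl
      | succ n => rfl
    rw [hnil] at hx'
    exact List.not_mem_nil hx'

lemma initRS_depth : (initRS P h d).depth = 1 := by
  unfold initRS
  rw [en_depth]

/-! ### run lemmas -/

lemma run_zero (a : ℕ) : run P h d a 0 = initRS P h d := rfl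

lemma run_succ (a t : ℕ) :
    run P h d a (t + 1) = mainIter P h d a (run P h d a t) := by
  unfold run
  rw [Function.iterate_succ_apply']

end TerminationProof


/-- Rectangle search terminates on finite state spaces: if
the set of states is finite and all edge costs are strictly positive, then
for any (nonnegative) heuristic `h` the main loop of rectangle search
executes only finitely many iterations, i.e. after some number `k` of
iterations every open list is empty (after which the main loop does nothing). -/
theorem rectangle_terminates_on_finite
    (V : Type) [DecidableEq V] [Finite V]
    (P : SearchProblem V) (h d : V → ℚ) (a : ℕ) (ha : 1 ≤ a)
    (hpos : EdgeCostsPos P)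
    (hnonneg : ∀ v, 0 ≤ h v) :
    ∃ k, Done (run P h d a k) := by
  classical
  haveI : Fintype V := Fintype.ofFinite V
  by_contra hnot
  push_neg at hnot
  have hnd : ∀ t, ¬ Done (run P h d a t) := hnot
  have hndall : ∀ t, ¬ (run P h d a t).openlists.all List.isEmpty = true :=
    fun t h' => hnd t ((done_iff _).2 h')
  obtain ⟨c0, hc0pos, hc0le⟩ := exists_c0 P hpos
  -- level/g invariant
  have hLG : ∀ t, LG c0 (run P h d a t) := by
    intro t
    induction t with
    | zero => exact initRS_LG P h d hc0le
    | succ t ih =>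
      rw [run_succ]
      exact mainIter_LG P h d hc0le ih
  -- depth invariant
  have hdep : ∀ t, 1 ≤ (run P h d a t).depth := by
    intro t
    induction t with
    | zero => rw [run_zero, initRS_depth]
    | succ t ih =>
      rw [run_succ]
      exact mainIter_depth_ge P h d ih
  -- trimmedness
  have htrim : ∀ t, TrimmedP (run P h d a t) := by
    intro t
    cases t with
    | zero =>
      obtain ⟨l0, hl0⟩ := initRS_openlists P h d
      intro z hz
      rw [run_zero, hl0] at hz
      injection hz with hz
      intro hze
      apply hnd 0
      intro l hl
      rw [run_zero, hl0] at hl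
      rcases List.mem_cons.1 hl with rfl | hl'
      · rw [hz]; exact hze
      · exact absurd hl' (List.not_mem_nil)
    | succ t =>
      rw [run_succ]
      exact mainIter_trimmed P h d (hndall t)
  have hfrontx : ∀ t, ∃ x rest, (run P h d a t).openlists.getD 0 [] = x :: rest :=
    fun t => front_exists (hndall t) (htrim t)
  -- offset is monotone
  have hoffmono : ∀ s t, s ≤ t → (run P h d a s).offset ≤ (run P h d a t).offset := by
    intro s t hst
    induction t, hst using Nat.le_induction with
    | base => exact le_rfl
    | succ t hst ih =>
      rw [run_succ]
      exact le_trans ih (mainIter_offset_ge P h d le_rfl)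
  -- progress: offset eventually increases
  have hstep : ∀ t, ∃ t', t ≤ t' ∧ (run P h d a t).offset < (run P h d a t').offset := by
    have key : ∀ K t, ((run P h d a t).openlists.getD 0 []).length ≤ K →
        ∃ t', t ≤ t' ∧ (run P h d a t).offset < (run P h d a t').offset := by
      intro K
      induction K with
      | zero =>
        intro t hK
        exfalso
        obtain ⟨x, rest, hfr⟩ := hfrontx t
        rw [hfr] at hK
        simp at hK
      | succ K ih =>
        intro t hK
        rcases mainIter_progress P h d (hndall t) (htrim t) (hdep t) ha with hlt | ⟨heq, hdec⟩
        · exact ⟨t + 1, by omega, by rw [run_succ]; exact hlt⟩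
        · rw [← run_succ] at heq hdec
          obtain ⟨t', ht', hlt'⟩ := ih (t + 1) (by omega)
          refine ⟨t', by omega, ?_⟩
          rw [← heq]
          exact hlt'
    intro t
    exact key _ t le_rfl
  have hunb : ∀ N, ∃ t, N ≤ (run P h d a t).offset := by
    intro N
    induction N with
    | zero => exact ⟨0, Nat.zero_le _⟩
    | succ N ih =>
      obtain ⟨t, ht⟩ := ih
      obtain ⟨t', _, hlt⟩ := hstep t
      exact ⟨t', by omega⟩
  -- case split on whether an incumbent is ever found
  rcases Classical.em (∃ t0, ((run P h d a t0).incumbent).isSome = true) with ⟨t0, hsome⟩ | hnoinc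
  · -- Case A : an incumbent exists from time t0 on
    obtain ⟨n0, hn0⟩ := Option.isSome_iff_exists.1 hsome
    set B0 : ℚ := n0.g with hB0
    set Λ0 : ℕ := (run P h d a t0).offset + (run P h d a t0).openlists.length with hΛ0
    have hK0 : KP h B0 Λ0 (run P h d a t0) := by
      constructor
      · have : incCost (run P h d a t0) = (B0 : WithTop ℚ) := by
          unfold incCost
          rw [hn0]
        rw [this]
      · intro i x hx
        left
        have hi : i < (run P h d a t0).openlists.length := by
          by_contra hc
          rw [getD_eq_nil_of_le (le_of_not_gt hc)] at hx
          exact List.not_mem_nil hx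
        omega
    have hKall : ∀ t, t0 ≤ t → KP h B0 Λ0 (run P h d a t) := by
      intro t ht
      induction t, ht using Nat.le_induction with
      | base => exact hK0
      | succ t ht ih =>
        rw [run_succ]
        exact mainIter_KP P h d hnonneg ih
    obtain ⟨N0, hN0⟩ := exists_nat_gt (B0 / c0)
    have hB0N : B0 < (N0 : ℚ) * c0 := by
      rw [div_lt_iff₀ hc0pos] at hN0
      exact hN0
    have hoffbd : ∀ t, t0 ≤ t → (run P h d a t).offset ≤ max Λ0 N0 := by
      intro t ht
      obtain ⟨x, rest, hfr⟩ := hfrontx t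
      have hxm : x ∈ (run P h d a t).openlists.getD 0 [] := by
        rw [hfr]
        exact List.mem_cons_self
      rcases (hKall t ht).2 0 x hxm with hle | hlt
      · have : (run P h d a t).offset ≤ Λ0 := by omega
        omega
      · have hg := hLG t 0 x hxm
        have hxg : x.g < B0 := by
          have := hnonneg x.state
          linarith
        have hlt2 : (((run P h d a t).offset + 0 + 1 : ℕ) : ℚ) * c0 < (N0 : ℚ) * c0 := by
          calc (((run P h d a t).offset + 0 + 1 : ℕ) : ℚ) * c0 ≤ x.g := hg
          _ < B0 := hxg
          _ < (N0 : ℚ) * c0 := hB0N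
        have hlt3 : (((run P h d a t).offset + 0 + 1 : ℕ) : ℚ) < (N0 : ℚ) :=
          lt_of_mul_lt_mul_right hlt2 hc0pos.le
        have hlt4 : (run P h d a t).offset + 0 + 1 < N0 := by exact_mod_cast hlt3
        have : (run P h d a t).offset ≤ N0 := by omega
        omega
    obtain ⟨t1, ht1⟩ := hunb (max Λ0 N0 + 1)
    have h1 := hoffbd (max t0 t1) (le_max_left _ _)
    have h2 : max Λ0 N0 + 1 ≤ (run P h d a (max t0 t1)).offset :=
      le_trans ht1 (hoffmono t1 (max t0 t1) (le_max_right _ _))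
    omega
  · -- Case B : no incumbent is ever found
    have hnoneall : ∀ t, (run P h d a t).incumbent = none := by
      intro t
      by_contra hc
      exact hnoinc ⟨t, Option.isSome_iff_ne_none.2 hc⟩
    have hclosedmono : ∀ s t, s ≤ t → ∀ v, ((run P h d a s).closed v).isSome = true →
        ((run P h d a t).closed v).isSome = true := by
      intro s t hst
      induction t, hst using Nat.le_induction with
      | base => exact fun v hv => hv
      | succ t hst ih =>
        intro v hv
        rw [run_succ]
        exact mainIter_closed_isSome P h d (ih v hv)
    set cd : ℕ → Finset V := fun t =>
      Finset.univ.filter (fun v => ((run P h d a t).closed v).isSome = true) with hcd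
    have hcdsub : ∀ s t, s ≤ t → cd s ⊆ cd t := by
      intro s t hst v hv
      rw [hcd, Finset.mem_filter] at hv ⊢
      exact ⟨Finset.mem_univ v, hclosedmono s t hst v hv.2⟩
    obtain ⟨T, hT⟩ := mono_bdd_eventually_const (fun t => (cd t).card)
      (fun s t hst => Finset.card_le_card (hcdsub s t hst)) (Fintype.card V)
      (fun t => Finset.card_le_univ _)
    have hTconst : ∀ t, T ≤ t → cd t = cd T := by
      intro t ht
      exact (Finset.eq_of_subset_of_card_le (hcdsub T t ht) (le_of_eq (hT t ht))).symm
    set S : V → Prop := fun v => ((run P h d a T).closed v).isSome = true with hSdef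
    set gl : List ℚ := ((Finset.univ : Finset V).toList.filterMap (run P h d a T).closed)
      ++ ((run P h d a T).openlists.flatten.map Node.g) with hgl
    set m : ℚ := gl.foldr max 0 with hm
    have hBIT : BI m S (run P h d a T) := by
      refine ⟨?_, ?_, fun v => Iff.rfl⟩
      · intro v g hv
        apply le_foldr_max
        rw [hgl]
        apply List.mem_append_left
        exact List.mem_filterMap.2 ⟨v, Finset.mem_toList.2 (Finset.mem_univ v), hv⟩
      · intro i x hx _
        apply le_foldr_max
        rw [hgl]
        apply List.mem_append_right
        exact List.mem_map.2 ⟨x, mem_join_of_getD hx, rfl⟩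
    have hmemcd : ∀ t v, ((run P h d a t).closed v).isSome = true → v ∈ cd t := by
      intro t v hv
      rw [hcd, Finset.mem_filter]
      exact ⟨Finset.mem_univ v, hv⟩
    have hBIall : ∀ t, T ≤ t → BI m S (run P h d a t) := by
      intro t ht
      induction t, ht using Nat.le_induction with
      | base => exact hBIT
      | succ t ht ih =>
        rw [run_succ]
        refine mainIter_BI P h d ih ?_
        intro v hv
        have hv1 : v ∈ cd (t + 1) := by
          apply hmemcd
          rw [run_succ]
          exact hv
        have hv2 : v ∈ cd T := by
          rw [← hTconst (t + 1) (by omega)]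
          exact hv1
        rw [hcd, Finset.mem_filter] at hv2
        exact hv2.2
    obtain ⟨N1, hN1⟩ := exists_nat_gt (m / c0)
    have hmN : m < (N1 : ℚ) * c0 := by
      rw [div_lt_iff₀ hc0pos] at hN1
      exact hN1
    have hoffbdB : ∀ t, T ≤ t → (run P h d a t).offset ≤ N1 := by
      intro t ht
      obtain ⟨x, rest, hfr, hcl⟩ :=
        mainIter_headClosed P h d (hndall t) (htrim t) (hdep t) ha (hnoneall t)
      have hxm : x ∈ (run P h d a t).openlists.getD 0 [] := by
        rw [hfr]
        exact List.mem_cons_self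
      have hcl1 : ((run P h d a (t + 1)).closed x.state).isSome = true := by
        rw [run_succ]
        exact hcl
      have hSx : S x.state := by
        have hv2 : x.state ∈ cd T := by
          rw [← hTconst (t + 1) (by omega)]
          exact hmemcd (t + 1) x.state hcl1
        rw [hcd, Finset.mem_filter] at hv2
        exact hv2.2
      have hx_t : ((run P h d a t).closed x.state).isSome = true :=
        ((hBIall t ht).2.2 x.state).mpr hSx
      have hxg : x.g ≤ m := (hBIall t ht).2.1 0 x hxm hx_t
      have hg := hLG t 0 x hxm
      have hlt2 : (((run P h d a t).offset + 0 + 1 : ℕ) : ℚ) * c0 < (N1 : ℚ) * c0 := by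
        calc (((run P h d a t).offset + 0 + 1 : ℕ) : ℚ) * c0 ≤ x.g := hg
        _ ≤ m := hxg
        _ < (N1 : ℚ) * c0 := hmN
      have hlt3 : (((run P h d a t).offset + 0 + 1 : ℕ) : ℚ) < (N1 : ℚ) :=
        lt_of_mul_lt_mul_right hlt2 hc0pos.le
      have hlt4 : (run P h d a t).offset + 0 + 1 < N1 := by exact_mod_cast hlt3
      omega
    obtain ⟨t1, ht1⟩ := hunb (N1 + 1)
    have h1 := hoffbdB (max T t1) (le_max_left _ _)
    have h2 : N1 + 1 ≤ (run P h d a (max T t1)).offset :=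
      le_trans ht1 (hoffmono t1 (max T t1) (le_max_right _ _))
    omega

end RectangleSearchFormal
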